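/- Let Λ = diag(-1,1,1), and let V₁ be the matrix with rows (0, q₁, q₂), (σq̄₁, 0, 0), (σq̄₂, 0, 0) and V₂ = 2kV₁ + iΛ(V₁² - V₁ₓ), where q₁, q₂ : ℝ² → ℂ are smooth. Then the zero-curvature (compatibility) condition U_t - V_x + [U, V] = 0 with U = ikΛ + V₁ and V = 2ik²Λ + V₂ holds identically in k if and only if q₁ and q₂ satisfy the 2-component NLS system i q₁ₜ + q₁ₓₓ - 2σ(|q₁|² + |q₂|²)q₁ = 0 and i q₂ₜ + q₂ₓₓ - 2σ(|q₁|² + |q₂|²)q₂ = 0. -/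

import Mathlib

open Matrix Complex

set_option maxHeartbeats 1000000 in
theorem stmt_19 (σ : ℂ) (hσ : σ = 1 ∨ σ = -1)
    (q₁ q₂ q₁x q₂x q₁t q₂t q₁xx q₂xx : ℝ → ℝ → ℂ)
    -- the named functions are genuine partial derivatives
    (hq₁x : ∀ x t, HasDerivAt (fun x => q₁ x t) (q₁x x t) x)
    (hq₂x : ∀ x t, HasDerivAt (fun x => q₂ x t) (q₂x x t) x)
    (hq₁t : ∀ x t, HasDerivAt (fun t => q₁ x t) (q₁t x t) t)
    (hq₂t : ∀ x t, HasDerivAt (fun t => q₂ x t) (q₂t x t) t)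
    (hq₁xx : ∀ x t, HasDerivAt (fun x => q₁x x t) (q₁xx x t) x)
    (hq₂xx : ∀ x t, HasDerivAt (fun x => q₂x x t) (q₂xx x t) x)
    (Λ : Matrix (Fin 3) (Fin 3) ℂ) (hΛ : Λ = Matrix.diagonal ![-1, 1, 1])
    (V₁ V₁x V₁xx Ut : ℝ → ℝ → Matrix (Fin 3) (Fin 3) ℂ)
    (hV₁ : ∀ x t, V₁ x t = !![0, q₁ x t, q₂ x t;
      σ * (starRingEnd ℂ) (q₁ x t), 0, 0; σ * (starRingEnd ℂ) (q₂ x t), 0, 0])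
    (hV₁x : ∀ x t, V₁x x t = !![0, q₁x x t, q₂x x t;
      σ * (starRingEnd ℂ) (q₁x x t), 0, 0; σ * (starRingEnd ℂ) (q₂x x t), 0, 0])
    (hV₁xx : ∀ x t, V₁xx x t = !![0, q₁xx x t, q₂xx x t;
      σ * (starRingEnd ℂ) (q₁xx x t), 0, 0; σ * (starRingEnd ℂ) (q₂xx x t), 0, 0])
    -- the t-derivative of U = ikΛ + V₁
    (hUt : ∀ x t, Ut x t = !![0, q₁t x t, q₂t x t;
      σ * (starRingEnd ℂ) (q₁t x t), 0, 0; σ * (starRingEnd ℂ) (q₂t x t), 0, 0])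
    (U V Vx : ℂ → ℝ → ℝ → Matrix (Fin 3) (Fin 3) ℂ)
    (hU : ∀ k x t, U k x t = (Complex.I * k) • Λ + V₁ x t)
    -- V = 2ik²Λ + V₂ with V₂ = 2kV₁ + iΛ(V₁² - V₁ₓ)
    (hV : ∀ k x t, V k x t = (2 * Complex.I * k ^ 2) • Λ + (2 * k) • V₁ x t
      + Complex.I • (Λ * (V₁ x t * V₁ x t - V₁x x t)))
    -- the x-derivative of V
    (hVx : ∀ k x t, Vx k x t = (2 * k) • V₁x x t
      + Complex.I • (Λ * (V₁x x t * V₁ x t + V₁ x t * V₁x x t - V₁xx x t))) :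
    (∀ (k : ℂ) (x t : ℝ),
        Ut x t - Vx k x t + (U k x t * V k x t - V k x t * U k x t) = 0) ↔
    (∀ x t : ℝ,
        Complex.I * q₁t x t + q₁xx x t
          - 2 * σ * ((‖q₁ x t‖ : ℂ) ^ 2 + (‖q₂ x t‖ : ℂ) ^ 2) * q₁ x t = 0 ∧
        Complex.I * q₂t x t + q₂xx x t
          - 2 * σ * ((‖q₁ x t‖ : ℂ) ^ 2 + (‖q₂ x t‖ : ℂ) ^ 2) * q₂ x t = 0) := by
  have hs : (starRingEnd ℂ) σ = σ := by rcases hσ with h | h <;> subst h <;> simp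
  have habs : ∀ z : ℂ, ((‖z‖ : ℂ)) ^ 2 = z * (starRingEnd ℂ) z := by
    intro z
    rw [Complex.mul_conj]
    norm_cast
    exact Complex.sq_norm z
  have hΛ' : Λ = !![(-1 : ℂ), 0, 0; 0, 1, 0; 0, 0, 1] := by
    rw [hΛ]; ext i j; fin_cases i <;> fin_cases j <;> rfl
  constructor
  · intro h x t
    have H := h 0 x t
    simp only [hUt, hVx, hU, hV, hV₁, hV₁x, hV₁xx, hΛ'] at H
    have H1 := congrFun (congrFun H 0) 1
    have H2 := congrFun (congrFun H 0) 2
    simp only [Matrix.mul_apply, Fin.sum_univ_three, Matrix.smul_apply, Matrix.sub_apply,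
      Matrix.add_apply, Matrix.zero_apply, Matrix.cons_val', Matrix.cons_val_zero,
      Matrix.cons_val_one, Matrix.head_cons, Matrix.empty_val', Matrix.cons_val_fin_one,
      Matrix.head_fin_const, Matrix.of_apply, Matrix.cons_val_two, Matrix.tail_cons,
      smul_eq_mul] at H1 H2
    rw [habs, habs]
    constructor
    · linear_combination (norm := first | ring1 | (ring_nf; simp only [Complex.I_sq]; ring1)) Complex.I * H1
    · linear_combination (norm := first | ring1 | (ring_nf; simp only [Complex.I_sq]; ring1)) Complex.I * H2
  · intro h k x t
    obtain ⟨h1, h2⟩ := h x t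
    rw [habs, habs] at h1 h2
    have hc1 : -Complex.I * (starRingEnd ℂ) (q₁t x t) + (starRingEnd ℂ) (q₁xx x t)
        - 2 * σ * (q₁ x t * (starRingEnd ℂ) (q₁ x t) + q₂ x t * (starRingEnd ℂ) (q₂ x t))
          * (starRingEnd ℂ) (q₁ x t) = 0 := by
      have h0 := congrArg (starRingEnd ℂ) h1
      simp only [map_add, map_sub, _root_.map_mul, map_ofNat, Complex.conj_conj,
        Complex.conj_I, map_zero, hs] at h0
      linear_combination h0
    have hc2 : -Complex.I * (starRingEnd ℂ) (q₂t x t) + (starRingEnd ℂ) (q₂xx x t)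
        - 2 * σ * (q₁ x t * (starRingEnd ℂ) (q₁ x t) + q₂ x t * (starRingEnd ℂ) (q₂ x t))
          * (starRingEnd ℂ) (q₂ x t) = 0 := by
      have h0 := congrArg (starRingEnd ℂ) h2
      simp only [map_add, map_sub, _root_.map_mul, map_ofNat, Complex.conj_conj,
        Complex.conj_I, map_zero, hs] at h0
      linear_combination h0
    simp only [hUt, hVx, hU, hV, hV₁, hV₁x, hV₁xx, hΛ']
    ext i j
    fin_cases i <;> fin_cases j <;>
      simp only [Fin.zero_eta, Fin.mk_one, Fin.reduceFinMk, Fin.isValue, Matrix.mul_apply,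
        Fin.sum_univ_three, Matrix.smul_apply, Matrix.sub_apply, Matrix.add_apply,
        Matrix.zero_apply, Matrix.cons_val', Matrix.cons_val_zero, Matrix.cons_val_one,
        Matrix.head_cons, Matrix.empty_val', Matrix.cons_val_fin_one, Matrix.head_fin_const,
        Matrix.of_apply, Matrix.cons_val_two, Matrix.tail_cons, smul_eq_mul]
    · linear_combination (norm := first | ring1 | (ring_nf; simp only [Complex.I_sq]; ring1))
    · linear_combination (norm := first | ring1 | (ring_nf; simp only [Complex.I_sq]; ring1)) (-Complex.I) * h1
    · linear_combination (norm := first | ring1 | (ring_nf; simp only [Complex.I_sq]; ring1)) (-Complex.I) * h2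
    · linear_combination (norm := first | ring1 | (ring_nf; simp only [Complex.I_sq]; ring1)) (σ * Complex.I) * hc1
    · linear_combination (norm := first | ring1 | (ring_nf; simp only [Complex.I_sq]; ring1))
    · linear_combination (norm := first | ring1 | (ring_nf; simp only [Complex.I_sq]; ring1))
    · linear_combination (norm := first | ring1 | (ring_nf; simp only [Complex.I_sq]; ring1)) (σ * Complex.I) * hc2
    · linear_combination (norm := first | ring1 | (ring_nf; simp only [Complex.I_sq]; ring1))
    · linear_combination (norm := first | ring1 | (ring_nf; simp only [Complex.I_sq]; ring1))
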